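/- arXiv:1803.09964 — 3 statements merged into one kernel-verified Lean document; each statement's English description precedes it below -/
import Mathlib

section
/- If φ : [0,∞) → ℝ is continuous and convex, then for all x, y ≥ 0, Λ(φ)(x,y) := φ(x+y) + φ(|x−y|) − 2φ(max{x,y}) ≥ 0. -/
theorem lambda_nonneg_of_convex (φ : ℝ → ℝ)
    (hcont : ContinuousOn φ (Set.Ici 0))
    (hconv : ConvexOn ℝ (Set.Ici 0) φ) :
    ∀ x y : ℝ, 0 ≤ x → 0 ≤ y →
      0 ≤ φ (x + y) + φ (|x - y|) - 2 * φ (max x y) := by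
  have key : ∀ x y : ℝ, 0 ≤ x → 0 ≤ y → y ≤ x →
      0 ≤ φ (x + y) + φ (|x - y|) - 2 * φ (max x y) := by
    intro x y hx hy hyx
    rw [abs_of_nonneg (by linarith), max_eq_left hyx]
    have h := hconv.2 (Set.mem_Ici.2 (by linarith : (0:ℝ) ≤ x + y))
      (Set.mem_Ici.2 (by linarith : (0:ℝ) ≤ x - y))
      (by norm_num : (0:ℝ) ≤ 1/2) (by norm_num : (0:ℝ) ≤ 1/2) (by norm_num)
    have hx' : (1/2 : ℝ) • (x+y) + (1/2 : ℝ) • (x-y) = x := by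
      simp [smul_eq_mul]; ring
    rw [hx'] at h
    simp only [smul_eq_mul] at h
    linarith
  intro x y hx hy
  rcases le_total y x with h | h
  · exact key x y hx hy h
  · have h2 := key y x hy hx h
    rw [abs_sub_comm, max_comm, add_comm y x] at h2
    exact h2
end

section
/- Let α ≥ 3 and φ(x) = x^α. Then for all 0 ≤ y ≤ x, Λ(φ)(x,y) = (x+y)^α + (x−y)^α − 2x^α ≤ α(α−1)·2^{α−3}·x^{α−2}·y². -/
lemma superadd_rpow {a b p : ℝ} (ha : 0 ≤ a) (hb : 0 ≤ b) (hp : 1 ≤ p) :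
    a ^ p + b ^ p ≤ (a + b) ^ p := by
  have h := NNReal.add_rpow_le_rpow_add a.toNNReal b.toNNReal hp
  have := NNReal.coe_le_coe.2 h
  push_cast [NNReal.coe_rpow, Real.coe_toNNReal _ ha, Real.coe_toNNReal _ hb,
    Real.coe_toNNReal _ (add_nonneg ha hb)] at this
  simpa using this

theorem lambda_rpow_bound (α : ℝ) (hα : 3 ≤ α) :
    ∀ x y : ℝ, 0 ≤ y → y ≤ x →
      (x + y) ^ α + (x - y) ^ α - 2 * x ^ α ≤
        α * (α - 1) * 2 ^ (α - 3) * x ^ (α - 2) * y ^ 2 := by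
  intro x y hy hyx
  have hx : (0:ℝ) ≤ x := hy.trans hyx
  set C : ℝ := α * (α - 1) * 2 ^ (α - 3) with hC
  set F : ℝ → ℝ := fun t => C * x ^ (α - 2) * t ^ 2 -
      ((x + t) ^ α + (x - t) ^ α - 2 * x ^ α) with hF
  set F1 : ℝ → ℝ := fun t => C * x ^ (α - 2) * (2 * t) -
      (α * (x + t) ^ (α - 1) - α * (x - t) ^ (α - 1)) with hF1
  set F2 : ℝ → ℝ := fun t => C * x ^ (α - 2) * 2 -
      (α * (α - 1) * (x + t) ^ (α - 2) + α * (α - 1) * (x - t) ^ (α - 2)) with hF2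
  -- derivatives
  have hd1 : ∀ t : ℝ, HasDerivAt F (F1 t) t := by
    intro t
    have h1 : HasDerivAt (fun t : ℝ => (x + t) ^ α) (α * (x + t) ^ (α - 1)) t := by
      have := (Real.hasDerivAt_rpow_const (x := x + t) (p := α)
        (Or.inr (by linarith))).comp t ((hasDerivAt_id t).const_add x)
      simpa [Function.comp_def] using this
    have h2 : HasDerivAt (fun t : ℝ => (x - t) ^ α) (-(α * (x - t) ^ (α - 1))) t := by
      have := (Real.hasDerivAt_rpow_const (x := x - t) (p := α)
        (Or.inr (by linarith))).comp t ((hasDerivAt_id t).neg.const_add x)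
      simpa [Function.comp_def, mul_comm] using this
    have h3 : HasDerivAt (fun t : ℝ => C * x ^ (α - 2) * t ^ 2)
        (C * x ^ (α - 2) * (2 * t)) t := by
      simpa [mul_comm] using ((hasDerivAt_pow 2 t).const_mul (C * x ^ (α - 2)))
    have := h3.sub ((h1.add h2).sub (hasDerivAt_const t (2 * x ^ α)))
    refine this.congr_deriv ?_
    ring
  have hd2 : ∀ t : ℝ, HasDerivAt F1 (F2 t) t := by
    intro t
    have h1 : HasDerivAt (fun t : ℝ => (x + t) ^ (α - 1))
        ((α - 1) * (x + t) ^ (α - 2)) t := by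
      have := (Real.hasDerivAt_rpow_const (x := x + t) (p := α - 1)
        (Or.inr (by linarith))).comp t ((hasDerivAt_id t).const_add x)
      have e : α - 1 - 1 = α - 2 := by ring
      simpa [Function.comp_def, e] using this
    have h2 : HasDerivAt (fun t : ℝ => (x - t) ^ (α - 1))
        (-((α - 1) * (x - t) ^ (α - 2))) t := by
      have := (Real.hasDerivAt_rpow_const (x := x - t) (p := α - 1)
        (Or.inr (by linarith))).comp t ((hasDerivAt_id t).neg.const_add x)
      have e : α - 1 - 1 = α - 2 := by ring
      simpa [Function.comp_def, e, mul_comm] using this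
    have h3 : HasDerivAt (fun t : ℝ => C * x ^ (α - 2) * (2 * t))
        (C * x ^ (α - 2) * 2) t := by
      simpa [mul_comm] using ((hasDerivAt_id t).const_mul 2).const_mul (C * x ^ (α - 2))
    have := h3.sub ((h1.const_mul α).sub (h2.const_mul α))
    refine this.congr_deriv ?_
    ring
  have hαα : 0 ≤ α * (α - 1) := mul_nonneg (by linarith) (by linarith)
  -- F2 ≥ 0 on (0, x)
  have hF2nn : ∀ t ∈ Set.Ioo (0:ℝ) x, 0 ≤ F2 t := by
    intro t ht
    have h1 : (x + t) ^ (α - 2) + (x - t) ^ (α - 2) ≤ (2 * x) ^ (α - 2) := by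
      have := superadd_rpow (a := x + t) (b := x - t) (p := α - 2)
        (by linarith [ht.1]) (by linarith [ht.2]) (by linarith)
      have e : x + t + (x - t) = 2 * x := by ring
      rwa [e] at this
    have h2 : (2 * x) ^ (α - 2) = 2 ^ (α - 2) * x ^ (α - 2) :=
      Real.mul_rpow (by norm_num) hx
    have h3 : (2:ℝ) ^ (α - 2) = 2 ^ (α - 3) * 2 := by
      rw [← Real.rpow_add_one (by norm_num) (α - 3)]; ring_nf
    have h4 : α * (α - 1) * ((x + t) ^ (α - 2) + (x - t) ^ (α - 2)) ≤
        α * (α - 1) * (2 ^ (α - 3) * 2 * x ^ (α - 2)) := by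
      apply mul_le_mul_of_nonneg_left _ hαα
      rw [← h3]; rw [h2] at h1; exact h1
    simp only [hF2, hC]
    nlinarith [h4]
  -- F1 monotone on [0, x]
  have hmono1 : MonotoneOn F1 (Set.Icc 0 x) := by
    apply monotoneOn_of_deriv_nonneg (convex_Icc 0 x)
    · exact fun t _ => (hd2 t).continuousAt.continuousWithinAt
    · exact fun t _ => ((hd2 t).differentiableAt).differentiableWithinAt
    · intro t ht
      rw [interior_Icc] at ht
      rw [(hd2 t).deriv]
      exact hF2nn t ht
  have hF10 : F1 0 = 0 := by simp [hF1]
  have hF1nn : ∀ t ∈ Set.Icc (0:ℝ) x, 0 ≤ F1 t := by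
    intro t ht
    have := hmono1 (Set.left_mem_Icc.2 hx) ht ht.1
    linarith [hF10]
  -- F monotone on [0, x]
  have hmono : MonotoneOn F (Set.Icc 0 x) := by
    apply monotoneOn_of_deriv_nonneg (convex_Icc 0 x)
    · exact fun t _ => (hd1 t).continuousAt.continuousWithinAt
    · exact fun t _ => ((hd1 t).differentiableAt).differentiableWithinAt
    · intro t ht
      rw [interior_Icc] at ht
      rw [(hd1 t).deriv]
      exact hF1nn t (Set.mem_Icc_of_Ioo ht)
  have hF0 : F 0 = 0 := by simp [hF]; ring
  have := hmono (Set.left_mem_Icc.2 hx) (Set.mem_Icc.2 ⟨hy, hyx⟩) hy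
  rw [hF0] at this
  simp only [hF] at this
  linarith
end

section
/- Let g be a nonnegative measure on (0,∞) with N = ∫ g(dx) and E = ∫ x g(dx) finite, and let α ∈ (1,2]. For φ(x) = x^α and 0 < y ≤ x one has Λ(φ)(x,y)/√(xy) ≤ (2^α − 2)(xy)^{(α−1)/2}, and consequently the double integral ∬_{(0,∞)²} [Λ(φ)(x,y)/√(xy)] g(dx) g(dy) ≤ (2^α − 2)·(M_{(α−1)/2}(g))², where Λ(φ)(x,y) = (x+y)^α + (x−y)^α − 2·max(x,y)^α. -/
open MeasureTheory

lemma key_ineq (α x y : ℝ) (hα1 : 1 < α) (hα2 : α ≤ 2) (hy : 0 < y) (hxy : y ≤ x) :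
    (x + y) ^ α + (x - y) ^ α - 2 * x ^ α ≤ (2 ^ α - 2) * (x * y) ^ (α / 2) := by
  have hx : (0:ℝ) < x := hy.trans_le hxy
  have hφ := convexOn_rpow hα1.le
  set s : ℝ := y / x with hs
  have hs0 : 0 ≤ s := div_nonneg hy.le hx.le
  have hs1 : s ≤ 1 := (div_le_one hx).2 hxy
  have hsy : s * x = y := div_mul_cancel₀ y hx.ne'
  have h1 := hφ.2 (Set.mem_Ici.2 hx.le) (Set.mem_Ici.2 (by linarith : (0:ℝ) ≤ 2 * x))
      (by linarith : (0:ℝ) ≤ 1 - s) hs0 (by ring)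
  have h2 := hφ.2 (Set.mem_Ici.2 hx.le) (Set.mem_Ici.2 (le_refl (0:ℝ)))
      (by linarith : (0:ℝ) ≤ 1 - s) hs0 (by ring)
  simp only [smul_eq_mul] at h1 h2
  have e1 : (1 - s) * x + s * (2 * x) = x + y := by
    have h : (1 - s) * x + s * (2 * x) = x + s * x := by ring
    rw [h, hsy]
  have e2 : (1 - s) * x + s * 0 = x - y := by
    have h : (1 - s) * x + s * 0 = x - s * x := by ring
    rw [h, hsy]
  rw [e1] at h1; rw [e2] at h2
  rw [Real.zero_rpow (by linarith : α ≠ 0)] at h2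
  have h2x : (2 * x) ^ α = 2 ^ α * x ^ α := Real.mul_rpow (by norm_num) hx.le
  have hyx : s * x ^ α = y * x ^ (α - 1) := by
    rw [hs, Real.rpow_sub hx, Real.rpow_one]
    field_simp
  have hA : (x + y) ^ α + (x - y) ^ α - 2 * x ^ α ≤ (2 ^ α - 2) * (y * x ^ (α - 1)) := by
    rw [← hyx]; rw [h2x] at h1; nlinarith [h1, h2]
  refine hA.trans ?_
  have hC : (0:ℝ) ≤ 2 ^ α - 2 := by
    have h : (2:ℝ) ^ (1:ℝ) ≤ 2 ^ α := Real.rpow_le_rpow_of_exponent_le one_le_two hα1.le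
    rw [Real.rpow_one] at h; linarith
  refine mul_le_mul_of_nonneg_left ?_ hC
  have hmul : (x * y) ^ (α / 2) = x ^ (α / 2) * y ^ (α / 2) := Real.mul_rpow hx.le hy.le
  rw [hmul]
  have h3 : y ^ (1 - α / 2) ≤ x ^ (1 - α / 2) :=
    Real.rpow_le_rpow hy.le hxy (by linarith)
  have hsplit : y ^ (α / 2) * y ^ (1 - α / 2) = y := by
    rw [← Real.rpow_add hy]; norm_num
  calc y * x ^ (α - 1) = y ^ (α / 2) * y ^ (1 - α / 2) * x ^ (α - 1) := by rw [hsplit]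
      _ ≤ y ^ (α / 2) * x ^ (1 - α / 2) * x ^ (α - 1) := by gcongr
      _ = x ^ (α / 2) * y ^ (α / 2) := by
        rw [mul_assoc, ← Real.rpow_add hx, show 1 - α/2 + (α-1) = α/2 by ring, mul_comm]

lemma part1_ineq (α x y : ℝ) (hα1 : 1 < α) (hα2 : α ≤ 2) (hy : 0 < y) (hxy : y ≤ x) :
    ((x + y) ^ α + (x - y) ^ α - 2 * max x y ^ α) / Real.sqrt (x * y) ≤
      (2 ^ α - 2) * (x * y) ^ ((α - 1) / 2) := by
  have hx : (0:ℝ) < x := hy.trans_le hxy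
  have hxy0 : (0:ℝ) < x * y := mul_pos hx hy
  rw [max_eq_left hxy, div_le_iff₀ (Real.sqrt_pos.2 hxy0), Real.sqrt_eq_rpow,
    mul_assoc, ← Real.rpow_add hxy0, show (α - 1)/2 + 1/2 = α/2 by ring]
  exact key_ineq α x y hα1 hα2 hy hxy

lemma num_nonneg (α x y : ℝ) (hα1 : 1 < α) (hx : 0 < x) (hy : 0 < y) :
    0 ≤ (x + y) ^ α + |x - y| ^ α - 2 * max x y ^ α := by
  have hφ := convexOn_rpow hα1.le
  set m := max x y with hm
  set s := min x y with hs'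
  have hms : 0 ≤ m - s := sub_nonneg.2 (min_le_max)
  have hs0 : 0 ≤ s := le_min hx.le hy.le
  have h := hφ.2 (Set.mem_Ici.2 (by linarith : (0:ℝ) ≤ m + s))
      (Set.mem_Ici.2 hms) (by norm_num : (0:ℝ) ≤ (1:ℝ)/2) (by norm_num : (0:ℝ) ≤ (1:ℝ)/2)
      (by norm_num)
  simp only [smul_eq_mul] at h
  have e : (1:ℝ)/2 * (m + s) + 1/2 * (m - s) = m := by ring
  rw [e] at h
  have e1 : m + s = x + y := max_add_min x y
  have e2 : m - s = |x - y| := by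
    rw [hm, hs', max_comm, min_comm, max_sub_min_eq_abs]
  rw [e1, e2] at h
  linarith

lemma pt_bound (α x y : ℝ) (hα1 : 1 < α) (hα2 : α ≤ 2) (hx : 0 < x) (hy : 0 < y) :
    ((x + y) ^ α + |x - y| ^ α - 2 * max x y ^ α) / Real.sqrt (x * y) ≤
      (2 ^ α - 2) * (x ^ ((α - 1) / 2) * y ^ ((α - 1) / 2)) := by
  rw [← Real.mul_rpow hx.le hy.le]
  rcases le_total y x with h | h
  · rw [show |x - y| = x - y from abs_of_nonneg (by linarith)]
    exact part1_ineq α x y hα1 hα2 hy h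
  · have e : ((x + y) ^ α + |x - y| ^ α - 2 * max x y ^ α) / Real.sqrt (x * y)
        = ((y + x) ^ α + (y - x) ^ α - 2 * max y x ^ α) / Real.sqrt (y * x) := by
      rw [abs_sub_comm, abs_of_nonneg (by linarith : (0:ℝ) ≤ y - x),
        max_comm x y, mul_comm x y]
      ring_nf
    rw [e, mul_comm x y]
    exact part1_ineq α y x hα1 hα2 hx h

theorem lambda_quadratic_estimate (g : Measure ℝ) [IsFiniteMeasure g]
    (α : ℝ) (hα1 : 1 < α) (hα2 : α ≤ 2)
    (hsupp : g (Set.Ioi 0)ᶜ = 0)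
    (hE : Integrable (fun x => x) g) :
    (∀ x y : ℝ, 0 < y → y ≤ x →
      ((x + y) ^ α + (x - y) ^ α - 2 * max x y ^ α) / Real.sqrt (x * y) ≤
        (2 ^ α - 2) * (x * y) ^ ((α - 1) / 2)) ∧
    (∫ x in Set.Ioi (0:ℝ), ∫ y in Set.Ioi (0:ℝ),
        ((x + y) ^ α + |x - y| ^ α - 2 * max x y ^ α) / Real.sqrt (x * y) ∂g ∂g) ≤
      (2 ^ α - 2) * (∫ x in Set.Ioi (0:ℝ), x ^ ((α - 1) / 2) ∂g) ^ 2 := by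
  constructor
  · exact fun x y hy hxy => part1_ineq α x y hα1 hα2 hy hxy
  set β := (α - 1) / 2 with hβ
  have hβ0 : 0 ≤ β := by rw [hβ]; linarith
  have hβ1 : β ≤ 1 := by rw [hβ]; linarith
  have hC : (0:ℝ) ≤ 2 ^ α - 2 := by
    have h : (2:ℝ) ^ (1:ℝ) ≤ 2 ^ α := Real.rpow_le_rpow_of_exponent_le one_le_two hα1.le
    rw [Real.rpow_one] at h; linarith
  -- integrability of y ↦ y^β on (0,∞)
  have hIntβ : Integrable (fun y : ℝ => y ^ β) (g.restrict (Set.Ioi 0)) := by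
    refine Integrable.mono' (((integrable_const 1).add hE.abs).restrict)
      ?_ ?_
    · exact (Measurable.aestronglyMeasurable (by measurability))
    · filter_upwards [ae_restrict_mem measurableSet_Ioi] with y hy
      have hy0 : (0:ℝ) < y := hy
      simp only [Pi.add_apply]
      rw [Real.norm_eq_abs, abs_of_nonneg (Real.rpow_nonneg hy0.le β),
        abs_of_nonneg hy0.le]
      rcases le_total y 1 with h | h
      · have h1 := Real.rpow_le_one hy0.le h hβ0
        linarith
      · have h1 : y ^ β ≤ y ^ (1:ℝ) := Real.rpow_le_rpow_of_exponent_le h hβ1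
        rw [Real.rpow_one] at h1
        linarith
  set M := ∫ x in Set.Ioi (0:ℝ), x ^ β ∂g with hM
  have hM0 : 0 ≤ M := by
    refine integral_nonneg_of_ae ?_
    filter_upwards [ae_restrict_mem measurableSet_Ioi] with y hy
    exact Real.rpow_nonneg (le_of_lt hy) β
  set f : ℝ → ℝ → ℝ := fun x y =>
    ((x + y) ^ α + |x - y| ^ α - 2 * max x y ^ α) / Real.sqrt (x * y) with hf
  have hf0 : ∀ x ∈ Set.Ioi (0:ℝ), ∀ y ∈ Set.Ioi (0:ℝ), 0 ≤ f x y := fun x hx y hy =>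
    div_nonneg (num_nonneg α x y hα1 hx hy) (Real.sqrt_nonneg _)
  have hinner : ∀ x ∈ Set.Ioi (0:ℝ),
      (∫ y in Set.Ioi (0:ℝ), f x y ∂g) ≤ (2 ^ α - 2) * (M * x ^ β) := by
    intro x hx
    have hb : (∫ y in Set.Ioi (0:ℝ), f x y ∂g)
        ≤ ∫ y in Set.Ioi (0:ℝ), (2 ^ α - 2) * x ^ β * y ^ β ∂g := by
      refine integral_mono_of_nonneg ?_ (hIntβ.const_mul _) ?_
      · filter_upwards [ae_restrict_mem measurableSet_Ioi] with y hy
        exact hf0 x hx y hy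
      · filter_upwards [ae_restrict_mem measurableSet_Ioi] with y hy
        have := pt_bound α x y hα1 hα2 hx hy
        rw [hf]; dsimp only; linarith [this]
    rw [integral_const_mul] at hb
    calc (∫ y in Set.Ioi (0:ℝ), f x y ∂g) ≤ (2 ^ α - 2) * x ^ β * M := hb
      _ = (2 ^ α - 2) * (M * x ^ β) := by ring
  have houter : (∫ x in Set.Ioi (0:ℝ), ∫ y in Set.Ioi (0:ℝ), f x y ∂g ∂g)
      ≤ ∫ x in Set.Ioi (0:ℝ), (2 ^ α - 2) * M * x ^ β ∂g := by
    refine integral_mono_of_nonneg ?_ (hIntβ.const_mul _) ?_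
    · filter_upwards [ae_restrict_mem measurableSet_Ioi] with x hx
      refine integral_nonneg_of_ae ?_
      filter_upwards [ae_restrict_mem measurableSet_Ioi] with y hy
      exact hf0 x hx y hy
    · filter_upwards [ae_restrict_mem measurableSet_Ioi] with x hx
      have := hinner x hx
      linarith [this]
  rw [integral_const_mul] at houter
  calc (∫ x in Set.Ioi (0:ℝ), ∫ y in Set.Ioi (0:ℝ), f x y ∂g ∂g)
      ≤ (2 ^ α - 2) * M * M := houter
    _ = (2 ^ α - 2) * M ^ 2 := by ring
end
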